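/- arXiv:1306.1679 — 3 statements merged into one kernel-verified Lean document; each statement's English description precedes it below -/
import Mathlib

section
/- Let f, g be quaternions with f² = g² = −1, and let h : (0,∞) × (0,2π) → ℍ be such that (r,θ) ↦ h(r,θ) is integrable with respect to the measure dθ dr/r. Then for all v ∈ ℝ and k ∈ ℤ, the ± split and the Clifford Fourier–Mellin transform commute: M{h±}(v,k) = (M{h}(v,k))±, where h±(r,θ) = ½(h(r,θ) ± f h(r,θ) g) and (M{h}(v,k))± = ½(M{h}(v,k) ± f M{h}(v,k) g). -/
open Quaternion MeasureTheory Real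

/-- The measure `dθ dr/r` on `(0,∞) × (0,2π) ⊆ ℝ × ℝ`, first coordinate `r`,
second coordinate `θ`. -/
noncomputable def mellinMeasure : Measure (ℝ × ℝ) :=
  ((volume.restrict (Set.Ioi (0 : ℝ))).withDensity fun r => ENNReal.ofReal r⁻¹).prod
    (volume.restrict (Set.Ioo (0 : ℝ) (2 * π)))

/-- The Clifford Fourier–Mellin transform of a quaternion-valued signal. -/
noncomputable def CFMT (f g : ℍ[ℝ]) (h : ℝ × ℝ → ℍ[ℝ]) (v : ℝ) (k : ℤ) : ℍ[ℝ] :=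
  (2 * π)⁻¹ •
    ∫ p, NormedSpace.exp ((-(v * Real.log p.1)) • f) * h p *
      NormedSpace.exp ((-((k : ℝ) * p.2)) • g) ∂mellinMeasure

lemma re_eq_zero_of_sq_neg_one (f : ℍ[ℝ]) (hf : f ^ 2 = -1) : f.re = 0 := by
  have h1 := congrArg QuaternionAlgebra.re hf
  have h2 := congrArg QuaternionAlgebra.imI hf
  have h3 := congrArg QuaternionAlgebra.imJ hf
  have h4 := congrArg QuaternionAlgebra.imK hf
  simp [pow_two, Quaternion.re_mul, Quaternion.imI_mul, Quaternion.imJ_mul,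
    Quaternion.imK_mul] at h1 h2 h3 h4
  nlinarith [sq_nonneg f.re, sq_nonneg f.imI, sq_nonneg f.imJ, sq_nonneg f.imK]

lemma star_eq_neg_of_sq_neg_one (f : ℍ[ℝ]) (hf : f ^ 2 = -1) : star f = -f := by
  have := re_eq_zero_of_sq_neg_one f hf
  ext <;> simp [this]

lemma norm_exp_smul_eq_one (f : ℍ[ℝ]) (hf : f ^ 2 = -1) (t : ℝ) :
    ‖NormedSpace.exp (t • f)‖ = 1 := by
  letI : NormedAlgebra ℚ ℍ[ℝ] := .restrictScalars ℚ ℝ ℍ[ℝ]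
  have hstar : star (NormedSpace.exp (t • f)) = NormedSpace.exp (-(t • f)) := by
    rw [NormedSpace.star_exp, Quaternion.star_smul, star_eq_neg_of_sq_neg_one f hf, smul_neg]
  have h1 : NormedSpace.exp (t • f) * star (NormedSpace.exp (t • f)) = 1 := by
    rw [hstar, ← NormedSpace.exp_add_of_commute (Commute.refl (t • f)).neg_right,
      add_neg_cancel, NormedSpace.exp_zero]
  have h2 : ‖NormedSpace.exp (t • f)‖ * ‖NormedSpace.exp (t • f)‖ = 1 := by
    have := congrArg norm h1
    rwa [norm_mul, Quaternion.norm_star, norm_one] at this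
  nlinarith [norm_nonneg (NormedSpace.exp (t • f))]

lemma half_eq_smul (x : ℍ[ℝ]) : x / 2 = (2 : ℝ)⁻¹ • x := by
  rw [div_eq_mul_inv, ← map_ofNat (algebraMap ℝ ℍ[ℝ]) 2, ← map_inv₀,
    Algebra.algebraMap_eq_smul_one, mul_smul_comm, mul_one]

theorem cfmt_commutes_with_pm_split (f g : ℍ[ℝ]) (hf : f ^ 2 = -1) (hg : g ^ 2 = -1)
    (h : ℝ × ℝ → ℍ[ℝ]) (hInt : Integrable h mellinMeasure) (v : ℝ) (k : ℤ) :
    CFMT f g (fun p => (h p + f * h p * g) / 2) v k =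
      (CFMT f g h v k + f * CFMT f g h v k * g) / 2 ∧
    CFMT f g (fun p => (h p - f * h p * g) / 2) v k =
      (CFMT f g h v k - f * CFMT f g h v k * g) / 2 := by
  set A : ℝ × ℝ → ℍ[ℝ] := fun p => NormedSpace.exp ((-(v * Real.log p.1)) • f) with hAdef
  set B : ℝ × ℝ → ℍ[ℝ] := fun p => NormedSpace.exp ((-((k : ℝ) * p.2)) • g) with hBdef
  have hAn : ∀ p, ‖A p‖ = 1 := fun p => norm_exp_smul_eq_one f hf _
  have hBn : ∀ p, ‖B p‖ = 1 := fun p => norm_exp_smul_eq_one g hg _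
  have hcA : ∀ p, f * A p = A p * f := fun p =>
    (((Commute.refl f).smul_right (-(v * Real.log p.1))).exp_right).eq
  have hcB : ∀ p, g * B p = B p * g := fun p =>
    (((Commute.refl g).smul_right (-((k : ℝ) * p.2))).exp_right).eq
  letI : NormedAlgebra ℚ ℍ[ℝ] := .restrictScalars ℚ ℝ ℍ[ℝ]
  have hAm : StronglyMeasurable A :=
    NormedSpace.exp_continuous.comp_stronglyMeasurable
      ((((Real.measurable_log.comp measurable_fst).const_mul v).neg).stronglyMeasurable.smul_const f)
  have hBm : StronglyMeasurable B :=
    NormedSpace.exp_continuous.comp_stronglyMeasurable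
      (((measurable_snd.const_mul ((k : ℝ))).neg).stronglyMeasurable.smul_const g)
  set F : ℝ × ℝ → ℍ[ℝ] := fun p => A p * h p * B p with hFdef
  have hFm : AEStronglyMeasurable F mellinMeasure :=
    (hAm.aestronglyMeasurable.mul hInt.1).mul hBm.aestronglyMeasurable
  have hFi : Integrable F mellinMeasure := by
    refine Integrable.mono' hInt.norm hFm (ae_of_all _ fun p => ?_)
    rw [hFdef]
    simp only [norm_mul, hAn, hBn, one_mul, mul_one, le_refl]
  have hLFi : Integrable (fun p => f * F p * g) mellinMeasure := by
    have := ContinuousLinearMap.integrable_comp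
      (ContinuousLinearMap.mulLeftRight ℝ ℍ[ℝ] f g) hFi
    simpa [ContinuousLinearMap.mulLeftRight_apply] using this
  have hint_eq : (∫ p, f * F p * g ∂mellinMeasure) = f * (∫ p, F p ∂mellinMeasure) * g := by
    have := ContinuousLinearMap.integral_comp_comm
      (ContinuousLinearMap.mulLeftRight ℝ ℍ[ℝ] f g) hFi
    simpa [ContinuousLinearMap.mulLeftRight_apply] using this
  have comm : ∀ p, A p * (f * h p * g) * B p = f * F p * g := fun p => by
    calc A p * (f * h p * g) * B p = (A p * f) * (h p * (g * B p)) := by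
          simp only [mul_assoc]
      _ = (f * A p) * (h p * (B p * g)) := by rw [hcA, hcB]
      _ = f * F p * g := by simp only [hFdef, mul_assoc]
  set I : ℍ[ℝ] := ∫ p, F p ∂mellinMeasure with hIdef
  have hC : CFMT f g h v k = (2 * π)⁻¹ • I := rfl
  constructor
  · have eqfun : ∀ p, A p * ((h p + f * h p * g) / 2) * B p
        = (2 : ℝ)⁻¹ • (F p + f * F p * g) := fun p => by
      rw [half_eq_smul, mul_smul_comm, smul_mul_assoc, mul_add, add_mul, comm p]
    have : CFMT f g (fun p => (h p + f * h p * g) / 2) v k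
        = (2 * π)⁻¹ • ((2 : ℝ)⁻¹ • (I + f * I * g)) := by
      rw [CFMT]
      congr 1
      rw [show (∫ p, A p * ((h p + f * h p * g) / 2) * B p ∂mellinMeasure)
          = ∫ p, (2 : ℝ)⁻¹ • (F p + f * F p * g) ∂mellinMeasure from
        integral_congr_ae (ae_of_all _ eqfun)]
      rw [integral_smul, integral_add hFi hLFi, hint_eq]
    rw [this, hC, half_eq_smul, mul_smul_comm, smul_mul_assoc, ← smul_add, smul_comm]
  · have eqfun : ∀ p, A p * ((h p - f * h p * g) / 2) * B p
        = (2 : ℝ)⁻¹ • (F p - f * F p * g) := fun p => by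
      rw [half_eq_smul, mul_smul_comm, smul_mul_assoc, mul_sub, sub_mul, comm p]
    have : CFMT f g (fun p => (h p - f * h p * g) / 2) v k
        = (2 * π)⁻¹ • ((2 : ℝ)⁻¹ • (I - f * I * g)) := by
      rw [CFMT]
      congr 1
      rw [show (∫ p, A p * ((h p - f * h p * g) / 2) * B p ∂mellinMeasure)
          = ∫ p, (2 : ℝ)⁻¹ • (F p - f * F p * g) ∂mellinMeasure from
        integral_congr_ae (ae_of_all _ eqfun)]
      rw [integral_smul, integral_sub hFi hLFi, hint_eq]
    rw [this, hC, half_eq_smul, mul_smul_comm, smul_mul_assoc, ← smul_sub, smul_comm]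
end

section
/- Let f, g be quaternions with f² = g² = −1, and let h : (0,∞) × (0,2π) → ℍ be integrable with respect to dθ dr/r, with split parts h±(r,θ) = ½(h(r,θ) ± f h(r,θ) g). Then the Clifford Fourier–Mellin transforms of h± have the quasi-complex forms M{h±}(v,k) = (1/2π) ∫₀^∞ ∫₀^{2π} h±(r,θ) · exp(±g v ln r) · exp(−g k θ) dθ dr/r = (1/2π) ∫₀^∞ ∫₀^{2π} exp(−f v ln r) · exp(±f k θ) · h±(r,θ) dθ dr/r, i.e. the kernel factors can be placed entirely on one side. -/
open Quaternion MeasureTheory Real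

lemma exp_semiconj {a b x : ℍ[ℝ]} (hab : a * x = x * b) :
    NormedSpace.exp a * x = x * NormedSpace.exp b := by
  have hpow : ∀ n : ℕ, a ^ n * x = x * b ^ n := by
    intro n
    induction n with
    | zero => simp
    | succ n ih => rw [pow_succ, pow_succ, mul_assoc, hab, ← mul_assoc, ih, mul_assoc]
  rw [NormedSpace.exp_eq_tsum ℝ, ← tsum_mul_right, ← tsum_mul_left]
  exact tsum_congr fun n => by rw [smul_mul_assoc, hpow n, mul_smul_comm]

lemma exp_smul_semiconj {a b x : ℍ[ℝ]} (hab : a * x = x * b) (t : ℝ) :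
    NormedSpace.exp (t • a) * x = x * NormedSpace.exp (t • b) := by
  apply exp_semiconj
  rw [smul_mul_assoc, hab, mul_smul_comm]

lemma half_smul (y : ℍ[ℝ]) : y / 2 = (2:ℝ)⁻¹ • y := by
  rw [div_eq_mul_inv, show ((2:ℍ[ℝ])) = ((2:ℝ):ℍ[ℝ]) from by norm_cast,
    ← Quaternion.coe_inv, ← Quaternion.coe_mul_eq_smul]
  exact (Quaternion.coe_commutes _ _).symm

lemma semiconj_plus {f g : ℍ[ℝ]} (hf : f ^ 2 = -1) (hg : g ^ 2 = -1) (x : ℍ[ℝ]) :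
    f * ((x + f * x * g) / 2) = ((x + f * x * g) / 2) * (-g) := by
  have hf' : f * f = -1 := by rw [← sq]; exact hf
  have hg' : g * g = -1 := by rw [← sq]; exact hg
  rw [half_smul, mul_smul_comm, smul_mul_assoc]
  congr 1
  have h1 : f * (x + f * x * g) = f * x + f * f * (x * g) := by noncomm_ring
  have h2 : (x + f * x * g) * (-g) = -(x * g) - f * x * (g * g) := by noncomm_ring
  rw [h1, h2, hf', hg']
  noncomm_ring

lemma semiconj_minus {f g : ℍ[ℝ]} (hf : f ^ 2 = -1) (hg : g ^ 2 = -1) (x : ℍ[ℝ]) :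
    f * ((x - f * x * g) / 2) = ((x - f * x * g) / 2) * g := by
  have hf' : f * f = -1 := by rw [← sq]; exact hf
  have hg' : g * g = -1 := by rw [← sq]; exact hg
  rw [half_smul, mul_smul_comm, smul_mul_assoc]
  congr 1
  have h1 : f * (x - f * x * g) = f * x - f * f * (x * g) := by noncomm_ring
  have h2 : (x - f * x * g) * g = x * g - f * x * (g * g) := by noncomm_ring
  rw [h1, h2, hf', hg']
  noncomm_ring

theorem cfmt_quasi_complex_forms (f g : ℍ[ℝ]) (hf : f ^ 2 = -1) (hg : g ^ 2 = -1)
    (h : ℝ × ℝ → ℍ[ℝ]) (hInt : Integrable h mellinMeasure) (v : ℝ) (k : ℤ) :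
    (CFMT f g (fun p => (h p + f * h p * g) / 2) v k =
        (2 * π)⁻¹ •
          ∫ p, ((h p + f * h p * g) / 2) * NormedSpace.exp ((v * Real.log p.1) • g) *
            NormedSpace.exp ((-((k : ℝ) * p.2)) • g) ∂mellinMeasure ∧
      CFMT f g (fun p => (h p + f * h p * g) / 2) v k =
        (2 * π)⁻¹ •
          ∫ p, NormedSpace.exp ((-(v * Real.log p.1)) • f) *
            NormedSpace.exp (((k : ℝ) * p.2) • f) * ((h p + f * h p * g) / 2) ∂mellinMeasure) ∧
    (CFMT f g (fun p => (h p - f * h p * g) / 2) v k =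
        (2 * π)⁻¹ •
          ∫ p, ((h p - f * h p * g) / 2) * NormedSpace.exp ((-(v * Real.log p.1)) • g) *
            NormedSpace.exp ((-((k : ℝ) * p.2)) • g) ∂mellinMeasure ∧
      CFMT f g (fun p => (h p - f * h p * g) / 2) v k =
        (2 * π)⁻¹ •
          ∫ p, NormedSpace.exp ((-(v * Real.log p.1)) • f) *
            NormedSpace.exp ((-((k : ℝ) * p.2)) • f) * ((h p - f * h p * g) / 2)
            ∂mellinMeasure) := by
  have key_plus : ∀ (t : ℝ) (x : ℍ[ℝ]),
      NormedSpace.exp (t • f) * ((x + f * x * g) / 2) =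
        ((x + f * x * g) / 2) * NormedSpace.exp (t • (-g)) := fun t x =>
    exp_smul_semiconj (semiconj_plus hf hg x) t
  have key_minus : ∀ (t : ℝ) (x : ℍ[ℝ]),
      NormedSpace.exp (t • f) * ((x - f * x * g) / 2) =
        ((x - f * x * g) / 2) * NormedSpace.exp (t • g) := fun t x =>
    exp_smul_semiconj (semiconj_minus hf hg x) t
  refine ⟨⟨?_, ?_⟩, ?_, ?_⟩ <;>
    [skip; skip; skip; skip] <;>
    (rw [CFMT]; congr 1;
     refine integral_congr_ae (Filter.Eventually.of_forall fun p => ?_); beta_reduce)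
  · rw [key_plus (-(v * Real.log p.1)) (h p), smul_neg, neg_smul, neg_neg]
  · rw [mul_assoc]
    conv_rhs => rw [mul_assoc, key_plus ((k : ℝ) * p.2) (h p), smul_neg, ← neg_smul]
  · rw [key_minus (-(v * Real.log p.1)) (h p)]
  · rw [mul_assoc, ← key_minus (-((k : ℝ) * p.2)) (h p), ← mul_assoc]
end

section
/- Let f, g be pure (real part zero) quaternions with f² = g² = −1, and let h : (0,∞) × (0,2π) → ℍ be integrable with respect to dθ dr/r, with split parts h±(r,θ) = ½(h(r,θ) ± f h(r,θ) g). Then for all v ∈ ℝ and k ∈ ℤ: |h(r,θ)|² = |h₋(r,θ)|² + |h₊(r,θ)|² for all (r,θ), and |M{h}(v,k)|² = |M{h₋}(v,k)|² + |M{h₊}(v,k)|². -/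
open Quaternion MeasureTheory Real

lemma quat_div_two (a : ℍ[ℝ]) : a / 2 = (2⁻¹ : ℝ) • a := by
  have h2 : ((2:ℝ) : ℍ[ℝ]) = (2 : ℍ[ℝ]) := by norm_cast
  rw [div_eq_mul_inv, ← h2, ← Quaternion.coe_inv, Quaternion.mul_coe_eq_smul]

lemma quat_re_mul_comm (a b : ℍ[ℝ]) : (a * b).re = (b * a).re := by
  simp [Quaternion.re_mul]; ring

/-- Orthogonality of the two eigenspaces of `x ↦ f x g`. -/
lemma quat_inner_eigen_zero (f g : ℍ[ℝ]) (hf : f ^ 2 = -1) (hg : g ^ 2 = -1)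
    (hfre : f.re = 0) (hgre : g.re = 0) (x y : ℍ[ℝ])
    (hx : f * x * g = -x) (hy : f * y * g = y) : (inner ℝ x y : ℝ) = 0 := by
  have hf2 : f * f = -1 := by rw [← sq]; exact hf
  have hg2 : g * g = -1 := by rw [← sq]; exact hg
  have hsf : star f = -f := by ext <;> simp [hfre]
  have hsg : star g = -g := by ext <;> simp [hgre]
  have key : (inner ℝ (f * x * g) (f * y * g) : ℝ) = (inner ℝ x y : ℝ) := by
    rw [Quaternion.inner_def, Quaternion.inner_def, star_mul, star_mul, hsf, hsg]
    have h1 : f * x * g * (-g * (star (y) * -f)) = -(f * ((x * star y) * f)) := by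
      have e1 : (-g : ℍ[ℝ]) * (star y * -f) = g * (star y * f) := by noncomm_ring
      rw [e1]
      calc f * x * g * (g * (star y * f))
          = f * (x * ((g * g) * (star y * f))) := by noncomm_ring
        _ = -(f * ((x * star y) * f)) := by rw [hg2]; noncomm_ring
    rw [h1]
    have h2 : (f * ((x * star y) * f)).re = -(x * star y).re := by
      rw [quat_re_mul_comm]
      have : x * star y * f * f = x * star y * (f * f) := by noncomm_ring
      rw [this, hf2]
      simp
    simp [h2]
  rw [hx, hy] at key
  simp only [inner_neg_left] at key
  linarith

lemma quat_pyth (x y : ℍ[ℝ]) (h : (inner ℝ x y : ℝ) = 0) :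
    ‖x + y‖ ^ 2 = ‖x‖ ^ 2 + ‖y‖ ^ 2 := by
  rw [norm_add_sq_real, h]; ring

lemma eigen_minus (f g : ℍ[ℝ]) (hf : f ^ 2 = -1) (hg : g ^ 2 = -1) (x : ℍ[ℝ]) :
    f * ((x - f * x * g) / 2) * g = -((x - f * x * g) / 2) := by
  have hf2 : f * f = -1 := by rw [← sq]; exact hf
  have hg2 : g * g = -1 := by rw [← sq]; exact hg
  have hfix : f * (f * x * g) * g = x := by
    calc f * (f * x * g) * g = (f * f) * x * (g * g) := by noncomm_ring
      _ = x := by rw [hf2, hg2]; noncomm_ring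
  rw [quat_div_two, mul_smul_comm, smul_mul_assoc, mul_sub, sub_mul, hfix, ← smul_neg,
    neg_sub]

lemma eigen_plus (f g : ℍ[ℝ]) (hf : f ^ 2 = -1) (hg : g ^ 2 = -1) (x : ℍ[ℝ]) :
    f * ((x + f * x * g) / 2) * g = (x + f * x * g) / 2 := by
  have hf2 : f * f = -1 := by rw [← sq]; exact hf
  have hg2 : g * g = -1 := by rw [← sq]; exact hg
  have hfix : f * (f * x * g) * g = x := by
    calc f * (f * x * g) * g = (f * f) * x * (g * g) := by noncomm_ring
      _ = x := by rw [hf2, hg2]; noncomm_ring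
  rw [quat_div_two, mul_smul_comm, smul_mul_assoc, mul_add, add_mul, hfix, add_comm]

lemma split_sum (f g : ℍ[ℝ]) (x : ℍ[ℝ]) :
    (x - f * x * g) / 2 + (x + f * x * g) / 2 = x := by
  rw [quat_div_two, quat_div_two, ← smul_add]
  have : x - f * x * g + (x + f * x * g) = (2 : ℝ) • x := by
    rw [two_smul]; abel
  rw [this, smul_smul]; norm_num

lemma cfmt_integrand_integrable (f g : ℍ[ℝ]) (v : ℝ) (k : ℤ)
    (hfre : f.re = 0) (hgre : g.re = 0)
    {x : ℝ × ℝ → ℍ[ℝ]} (hx : Integrable x mellinMeasure) :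
    Integrable (fun p => NormedSpace.exp ((-(v * Real.log p.1)) • f) * x p *
      NormedSpace.exp ((-((k : ℝ) * p.2)) • g)) mellinMeasure := by
  borelize ℍ[ℝ]
  have mE1 : Measurable fun p : ℝ × ℝ => NormedSpace.exp ((-(v * Real.log p.1)) • f) :=
    letI : NormedAlgebra ℚ ℍ[ℝ] := .restrictScalars ℚ ℝ ℍ[ℝ]
    NormedSpace.exp_continuous.measurable.comp
      (((Real.measurable_log.comp measurable_fst).const_mul v).neg.smul_const f)
  have mE2 : Measurable fun p : ℝ × ℝ => NormedSpace.exp ((-((k : ℝ) * p.2)) • g) :=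
    letI : NormedAlgebra ℚ ℍ[ℝ] := .restrictScalars ℚ ℝ ℍ[ℝ]
    NormedSpace.exp_continuous.measurable.comp
      ((measurable_snd.const_mul (k : ℝ)).neg.smul_const g)
  have nE1 : ∀ p : ℝ × ℝ, ‖NormedSpace.exp ((-(v * Real.log p.1)) • f)‖ = 1 := by
    intro p; rw [Quaternion.norm_exp]; simp [hfre, ← Real.exp_eq_exp_ℝ]
  have nE2 : ∀ p : ℝ × ℝ, ‖NormedSpace.exp ((-((k : ℝ) * p.2)) • g)‖ = 1 := by
    intro p; rw [Quaternion.norm_exp]; simp [hgre, ← Real.exp_eq_exp_ℝ]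
  refine (hx.norm).mono' ((mE1.aestronglyMeasurable.mul hx.1).mul mE2.aestronglyMeasurable) ?_
  filter_upwards with p
  rw [norm_mul, norm_mul, nE1, nE2, one_mul, mul_one]

theorem cfmt_modulus_identities (f g : ℍ[ℝ]) (hf : f ^ 2 = -1) (hg : g ^ 2 = -1)
    (hfre : f.re = 0) (hgre : g.re = 0)
    (h : ℝ × ℝ → ℍ[ℝ]) (hInt : Integrable h mellinMeasure) (v : ℝ) (k : ℤ) :
    (∀ p : ℝ × ℝ, ‖h p‖ ^ 2 =
      ‖(h p - f * h p * g) / 2‖ ^ 2 + ‖(h p + f * h p * g) / 2‖ ^ 2) ∧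
    ‖CFMT f g h v k‖ ^ 2 =
      ‖CFMT f g (fun p => (h p - f * h p * g) / 2) v k‖ ^ 2 +
      ‖CFMT f g (fun p => (h p + f * h p * g) / 2) v k‖ ^ 2 := by
  constructor
  · intro p
    have horth := quat_inner_eigen_zero f g hf hg hfre hgre _ _
      (eigen_minus f g hf hg (h p)) (eigen_plus f g hf hg (h p))
    rw [← quat_pyth _ _ horth, split_sum]
  · -- the transform part
    set E₁ : ℝ × ℝ → ℍ[ℝ] := fun p => NormedSpace.exp ((-(v * Real.log p.1)) • f) with hE₁
    set E₂ : ℝ × ℝ → ℍ[ℝ] := fun p => NormedSpace.exp ((-((k : ℝ) * p.2)) • g) with hE₂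
    have hm : Integrable (fun p => (h p - f * h p * g) / 2) mellinMeasure := by
      simp only [quat_div_two]
      exact (hInt.sub ((hInt.const_mul f).mul_const g)).smul (2⁻¹ : ℝ)
    have hp : Integrable (fun p => (h p + f * h p * g) / 2) mellinMeasure := by
      simp only [quat_div_two]
      exact (hInt.add ((hInt.const_mul f).mul_const g)).smul (2⁻¹ : ℝ)
    have him := cfmt_integrand_integrable f g v k hfre hgre hm
    have hip := cfmt_integrand_integrable f g v k hfre hgre hp
    -- CFMT is additive over the split
    have hsum : CFMT f g h v k =
        CFMT f g (fun p => (h p - f * h p * g) / 2) v k +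
        CFMT f g (fun p => (h p + f * h p * g) / 2) v k := by
      unfold CFMT
      rw [← smul_add, ← integral_add him hip]
      congr 1
      apply integral_congr_ae
      filter_upwards with p
      rw [← add_mul, ← mul_add, split_sum]
    -- commutation of f, g with the integrand kernels
    have c1 : ∀ p : ℝ × ℝ, Commute f (E₁ p) := fun p =>
      ((Commute.refl f).smul_right _).exp_right
    have c2 : ∀ p : ℝ × ℝ, Commute g (E₂ p) := fun p =>
      ((Commute.refl g).smul_right _).exp_right
    have conj_kernel : ∀ (p : ℝ × ℝ) (a : ℍ[ℝ]),
        f * (E₁ p * a * E₂ p) * g = E₁ p * (f * a * g) * E₂ p := by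
      intro p a
      calc f * (E₁ p * a * E₂ p) * g
          = (f * E₁ p) * (a * (E₂ p * g)) := by noncomm_ring
        _ = (E₁ p * f) * (a * (g * E₂ p)) := by rw [(c1 p).eq, (c2 p).eq]
        _ = E₁ p * (f * a * g) * E₂ p := by noncomm_ring
    -- the CFMT of each split part stays in its eigenspace
    let L : ℍ[ℝ] →L[ℝ] ℍ[ℝ] :=
      ((ContinuousLinearMap.mul ℝ ℍ[ℝ]).flip g).comp (ContinuousLinearMap.mul ℝ ℍ[ℝ] f)
    have hL : ∀ a : ℍ[ℝ], L a = f * a * g := fun a => rfl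
    have eigCFMT : ∀ (x : ℝ × ℝ → ℍ[ℝ]),
        Integrable (fun p => E₁ p * x p * E₂ p) mellinMeasure →
        f * CFMT f g x v k * g =
          (2 * π)⁻¹ • ∫ p, E₁ p * (f * x p * g) * E₂ p ∂mellinMeasure := by
      intro x hix
      unfold CFMT
      rw [mul_smul_comm, smul_mul_assoc]
      congr 1
      have := ContinuousLinearMap.integral_comp_comm L hix
      calc f * (∫ p, E₁ p * x p * E₂ p ∂mellinMeasure) * g
          = L (∫ p, E₁ p * x p * E₂ p ∂mellinMeasure) := (hL _).symm
        _ = ∫ p, L (E₁ p * x p * E₂ p) ∂mellinMeasure := this.symm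
        _ = ∫ p, E₁ p * (f * x p * g) * E₂ p ∂mellinMeasure := by
            apply integral_congr_ae
            filter_upwards with p
            rw [hL, conj_kernel]
    have eigm : f * CFMT f g (fun p => (h p - f * h p * g) / 2) v k * g =
        -(CFMT f g (fun p => (h p - f * h p * g) / 2) v k) := by
      rw [eigCFMT _ him]
      unfold CFMT
      rw [← smul_neg, ← integral_neg]
      congr 1
      apply integral_congr_ae
      filter_upwards with p
      rw [eigen_minus f g hf hg (h p), mul_neg, neg_mul]
    have eigp : f * CFMT f g (fun p => (h p + f * h p * g) / 2) v k * g =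
        CFMT f g (fun p => (h p + f * h p * g) / 2) v k := by
      rw [eigCFMT _ hip]
      unfold CFMT
      congr 1
      apply integral_congr_ae
      filter_upwards with p
      rw [eigen_plus f g hf hg (h p)]
    have horth := quat_inner_eigen_zero f g hf hg hfre hgre _ _ eigm eigp
    rw [hsum, quat_pyth _ _ horth]
end
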